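/- Selection/conditioning preserves CI under d-separation from the selection variable: let X, Y, Z, S be random variables with S binary, and suppose (X, Y) ⫫ S | Z and P(S = 0 | Z) > 0 a.s. Then X ⫫ Y | Z holds under P if and only if X ⫫ Y | Z holds under the conditional measure P(· | S = 0). -/

import Mathlib

open MeasureTheory ProbabilityTheory

lemma selection_aux
    {Ω : Type*} {m' : MeasurableSpace Ω} [mΩ : MeasurableSpace Ω] [StandardBorelSpace Ω]
    [Nonempty Ω]
    (μ : Measure Ω) [IsProbabilityMeasure μ]
    {βX βY : Type*} [MeasurableSpace βX] [MeasurableSpace βY]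
    (X : Ω → βX) (Y : Ω → βY) (S : Ω → Bool) (hm' : m' ≤ mΩ)
    (hX : Measurable X) (hY : Measurable Y) (hS : Measurable S)
    (hCI : CondIndepFun m' hm' (fun ω => (X ω, Y ω)) S μ)
    (hgpos : ∀ᵐ ω ∂μ, 0 < (μ⟦S ⁻¹' {false} | m'⟧) ω)
    (hpos : 0 < μ (S ⁻¹' {false})) :
    (CondIndepFun m' hm' X Y μ ↔ CondIndepFun m' hm' X Y (μ[|S ⁻¹' {false}])) := by
  set F : Set Ω := S ⁻¹' {false} with hFdef
  have hFmeas : MeasurableSet F := hS (measurableSet_singleton false)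
  have hF0 : μ F ≠ 0 := hpos.ne'
  have hFtop : μ F ≠ ⊤ := measure_ne_top μ F
  haveI hνprob : IsProbabilityMeasure (μ[|F]) := cond_isProbabilityMeasure hF0
  have hac : μ[|F] ≪ μ := cond_absolutelyContinuous
  -- null set transfer
  have hnull : ∀ N : Set Ω, MeasurableSet[m'] N → μ[|F] N = 0 → μ N = 0 := by
    intro N hN hνN
    have hNmeas : MeasurableSet N := hm' N hN
    have hμNF : μ (F ∩ N) = 0 := by
      rw [cond_apply hFmeas] at hνN
      rcases mul_eq_zero.mp hνN with h | h
      · exact absurd h (ENNReal.inv_ne_zero.mpr hFtop)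
      · exact h
    have hint : Integrable (F.indicator (fun _ => (1 : ℝ))) μ :=
      (integrable_const 1).indicator hFmeas
    have h1 : ∫ ω in N, (μ⟦F | m'⟧) ω ∂μ = ∫ ω in N, F.indicator (fun _ => (1 : ℝ)) ω ∂μ :=
      setIntegral_condExp hm' hint hN
    have h2 : ∫ ω in N, F.indicator (fun _ => (1 : ℝ)) ω ∂μ = (μ (F ∩ N)).toReal := by
      rw [integral_indicator hFmeas, setIntegral_const, smul_eq_mul, mul_one,
        measureReal_def, Measure.restrict_apply hFmeas]
    have h3 : ∫ ω in N, (μ⟦F | m'⟧) ω ∂μ = 0 := by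
      rw [h1, h2, hμNF, ENNReal.toReal_zero]
    have hnn : 0 ≤ᵐ[μ.restrict N] μ⟦F | m'⟧ :=
      ae_restrict_of_ae (condExp_nonneg (Filter.Eventually.of_forall
        (fun ω => Set.indicator_nonneg (fun _ _ => zero_le_one) ω)))
    have hzero : μ⟦F | m'⟧ =ᵐ[μ.restrict N] 0 :=
      (integral_eq_zero_iff_of_nonneg_ae hnn integrable_condExp.integrableOn).mp h3
    have hfalse : ∀ᵐ ω ∂μ.restrict N, False := by
      filter_upwards [hzero, ae_restrict_of_ae hgpos] with ω h0 hp
      rw [h0] at hp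
      exact lt_irrefl 0 hp
    have := ae_iff.mp hfalse
    simpa [Measure.restrict_apply_univ] using this
  -- a.e. transfer for m'-strongly-measurable functions
  have htrans : ∀ f g : Ω → ℝ, StronglyMeasurable[m'] f → StronglyMeasurable[m'] g →
      f =ᵐ[μ[|F]] g → f =ᵐ[μ] g := by
    intro f g hf hg hfg
    have hN : MeasurableSet[m'] {ω | ¬ f ω = g ω} :=
      (measurableSet_eq_fun hf.measurable hg.measurable).compl
    exact ae_iff.mpr (hnull _ hN (ae_iff.mp hfg))
  -- key: transfer of conditional expectations
  have key : ∀ E : Set Ω, MeasurableSet E →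
      ((μ⟦E ∩ F | m'⟧) =ᵐ[μ] fun ω => (μ⟦E | m'⟧) ω * (μ⟦F | m'⟧) ω) →
      (μ[|F])⟦E | m'⟧ =ᵐ[μ[|F]] μ⟦E | m'⟧ := by
    intro E hE hfact
    have hintE : Integrable (E.indicator (fun _ => (1 : ℝ))) (μ[|F]) :=
      (integrable_const 1).indicator hE
    have hgint : Integrable (μ⟦E | m'⟧) (μ[|F]) := by
      show Integrable _ ((μ F)⁻¹ • μ.restrict F)
      exact (integrable_condExp.restrict (s := F)).smul_measure (ENNReal.inv_ne_top.mpr hF0)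
    refine (ae_eq_condExp_of_forall_setIntegral_eq hm' hintE
      (fun s _ _ => hgint.integrableOn) (fun s hs _ => ?_)
      (stronglyMeasurable_condExp.aestronglyMeasurable)).symm
    have hsm : MeasurableSet s := hm' s hs
    have hrw : ∀ h : Ω → ℝ, ∫ ω in s, h ω ∂(μ[|F]) =
        ((μ F)⁻¹).toReal * ∫ ω in F ∩ s, h ω ∂μ := by
      intro h
      show ∫ ω in s, h ω ∂((μ F)⁻¹ • μ.restrict F) = _
      rw [Measure.restrict_smul, integral_smul_measure, Measure.restrict_restrict hsm,
        Set.inter_comm s F]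
      simp
    rw [hrw, hrw]
    congr 1
    have hEFind : Integrable (F.indicator (μ⟦E | m'⟧)) μ :=
      integrable_condExp.indicator hFmeas
    have hprod : (fun ω => (μ⟦E | m'⟧) ω * F.indicator (fun _ => (1 : ℝ)) ω)
        = F.indicator (μ⟦E | m'⟧) := by
      funext ω
      by_cases hω : ω ∈ F <;> simp [Set.indicator_of_mem, Set.indicator_of_notMem, hω]
    have hpull : μ[(fun ω => (μ⟦E | m'⟧) ω * F.indicator (fun _ => (1 : ℝ)) ω) | m']
        =ᵐ[μ] fun ω => (μ⟦E | m'⟧) ω * (μ⟦F | m'⟧) ω :=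
      condExp_mul_of_stronglyMeasurable_left (μ := μ) (m := m')
        (f := μ⟦E | m'⟧) (g := F.indicator (fun _ => (1 : ℝ)))
        stronglyMeasurable_condExp
        (by rw [show (μ⟦E | m'⟧) * F.indicator (fun _ => (1:ℝ))
              = F.indicator (μ⟦E | m'⟧) from hprod]; exact hEFind)
        ((integrable_const 1).indicator hFmeas)
    calc ∫ ω in F ∩ s, (μ⟦E | m'⟧) ω ∂μ
        = ∫ ω in s, F.indicator (μ⟦E | m'⟧) ω ∂μ := by
          rw [integral_indicator hFmeas, Measure.restrict_restrict hFmeas]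
      _ = ∫ ω in s, (fun ω => (μ⟦E | m'⟧) ω * F.indicator (fun _ => (1 : ℝ)) ω) ω ∂μ := by
          rw [hprod]
      _ = ∫ ω in s, (μ[(fun ω => (μ⟦E | m'⟧) ω * F.indicator (fun _ => (1 : ℝ)) ω) | m']) ω ∂μ := by
          rw [setIntegral_condExp hm' (by rw [show (fun ω => (μ⟦E | m'⟧) ω * F.indicator (fun _ => (1:ℝ)) ω)
            = F.indicator (μ⟦E | m'⟧) from hprod]; exact hEFind) hs]
      _ = ∫ ω in s, (μ⟦E | m'⟧) ω * (μ⟦F | m'⟧) ω ∂μ :=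
          setIntegral_congr_ae hsm (hpull.mono fun ω h _ => h)
      _ = ∫ ω in s, (μ⟦E ∩ F | m'⟧) ω ∂μ :=
          (setIntegral_congr_ae hsm (hfact.mono fun ω h _ => h)).symm
      _ = ∫ ω in s, (E ∩ F).indicator (fun _ => (1 : ℝ)) ω ∂μ :=
          setIntegral_condExp hm' ((integrable_const 1).indicator (hE.inter hFmeas)) hs
      _ = ∫ ω in F ∩ s, E.indicator (fun _ => (1 : ℝ)) ω ∂μ := by
          rw [integral_indicator (hE.inter hFmeas), integral_indicator hE,
            Measure.restrict_restrict (hE.inter hFmeas), Measure.restrict_restrict hE]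
          rw [Set.inter_comm E F, Set.inter_assoc, Set.inter_left_comm]
  -- factorization facts from hCI
  have hCI' := (condIndepFun_iff_condExp_inter_preimage_eq_mul (hX.prodMk hY) hS).mp hCI
  have factXY : ∀ (A : Set βX) (B : Set βY), MeasurableSet A → MeasurableSet B →
      (μ⟦(X ⁻¹' A ∩ Y ⁻¹' B) ∩ F | m'⟧) =ᵐ[μ]
        fun ω => (μ⟦X ⁻¹' A ∩ Y ⁻¹' B | m'⟧) ω * (μ⟦F | m'⟧) ω := by
    intro A B hA hB
    have := hCI' (A ×ˢ B) {false} (hA.prod hB) (measurableSet_singleton false)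
    simpa [Set.mk_preimage_prod] using this
  have factX : ∀ (A : Set βX), MeasurableSet A →
      (μ⟦X ⁻¹' A ∩ F | m'⟧) =ᵐ[μ] fun ω => (μ⟦X ⁻¹' A | m'⟧) ω * (μ⟦F | m'⟧) ω := by
    intro A hA
    have := hCI' (A ×ˢ (Set.univ : Set βY)) {false} (hA.prod MeasurableSet.univ)
      (measurableSet_singleton false)
    simpa [Set.mk_preimage_prod] using this
  have factY : ∀ (B : Set βY), MeasurableSet B →
      (μ⟦Y ⁻¹' B ∩ F | m'⟧) =ᵐ[μ] fun ω => (μ⟦Y ⁻¹' B | m'⟧) ω * (μ⟦F | m'⟧) ω := by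
    intro B hB
    have := hCI' ((Set.univ : Set βX) ×ˢ B) {false} (MeasurableSet.univ.prod hB)
      (measurableSet_singleton false)
    simpa [Set.mk_preimage_prod] using this
  rw [condIndepFun_iff_condExp_inter_preimage_eq_mul hX hY,
    condIndepFun_iff_condExp_inter_preimage_eq_mul hX hY]
  constructor
  · intro h A B hA hB
    have eXY := key _ ((hX hA).inter (hY hB)) (factXY A B hA hB)
    have eX := key _ (hX hA) (factX A hA)
    have eY := key _ (hY hB) (factY B hB)
    have hμ : (μ⟦X ⁻¹' A ∩ Y ⁻¹' B | m'⟧) =ᵐ[μ[|F]]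
        fun ω => (μ⟦X ⁻¹' A | m'⟧) ω * (μ⟦Y ⁻¹' B | m'⟧) ω :=
      (h A B hA hB).filter_mono hac.ae_le
    refine eXY.trans (hμ.trans ?_)
    filter_upwards [eX, eY] with ω h1 h2
    rw [h1, h2]
  · intro h A B hA hB
    have eXY := key _ ((hX hA).inter (hY hB)) (factXY A B hA hB)
    have eX := key _ (hX hA) (factX A hA)
    have eY := key _ (hY hB) (factY B hB)
    have hν : (μ⟦X ⁻¹' A ∩ Y ⁻¹' B | m'⟧) =ᵐ[μ[|F]]
        fun ω => (μ⟦X ⁻¹' A | m'⟧) ω * (μ⟦Y ⁻¹' B | m'⟧) ω := by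
      refine eXY.symm.trans ((h A B hA hB).trans ?_)
      filter_upwards [eX, eY] with ω h1 h2
      rw [h1, h2]
    exact htrans _ _ stronglyMeasurable_condExp
      (stronglyMeasurable_condExp.mul stronglyMeasurable_condExp) hν

/-- conditioning preserves CI given CI from the selection variable:
if `(X, Y) ⫫ S | Z`, `P(S = 0 | Z) > 0` a.s., and `P(S = 0) > 0`, then
`X ⫫ Y | Z` under `P` iff `X ⫫ Y | Z` under the conditional measure `P(· | S = 0)`. -/
theorem selection_preserves_condIndep
    {Ω : Type*} [MeasurableSpace Ω] [StandardBorelSpace Ω] [Nonempty Ω]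
    (μ : Measure Ω) [IsProbabilityMeasure μ]
    {βX βY βZ : Type*} [MeasurableSpace βX] [MeasurableSpace βY] [MeasurableSpace βZ]
    (X : Ω → βX) (Y : Ω → βY) (Z : Ω → βZ) (S : Ω → Bool)
    (hX : Measurable X) (hY : Measurable Y) (hZ : Measurable Z) (hS : Measurable S)
    (hCI : CondIndepFun (MeasurableSpace.comap Z inferInstance) hZ.comap_le
      (fun ω => (X ω, Y ω)) S μ)
    (hposZ : ∀ᵐ ω ∂μ, 0 < condExpKernel μ (MeasurableSpace.comap Z inferInstance) ω
      (S ⁻¹' {false}))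
    (hpos : 0 < μ (S ⁻¹' {false})) :
    (CondIndepFun (MeasurableSpace.comap Z inferInstance) hZ.comap_le X Y μ ↔
      CondIndepFun (MeasurableSpace.comap Z inferInstance) hZ.comap_le X Y
        (μ[|S ⁻¹' {false}])) := by
  have hFmeas : MeasurableSet (S ⁻¹' {false}) := hS (measurableSet_singleton false)
  have hgpos : ∀ᵐ ω ∂μ,
      0 < (μ⟦S ⁻¹' {false} | MeasurableSpace.comap Z inferInstance⟧) ω := by
    filter_upwards [hposZ, condExpKernel_ae_eq_condExp hZ.comap_le hFmeas] with ω h1 h2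
    rw [← h2]
    exact ENNReal.toReal_pos h1.ne' (measure_ne_top _ _)
  exact selection_aux μ X Y S hZ.comap_le hX hY hS hCI hgpos hpos
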